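/- Colored version: let 2 ≤ d_1 < ... < d_r and let b_{d_1},...,b_{d_r} be positive integers. Let z = \sum_{n≥0} a_n x^{n+1} be the compositional inverse of x = z - \sum_{i=1}^{r} b_{d_i} z^{d_i}. Then a_n = \sum_{λ} (1/(n+1)) * binomial(n+k, k) * multinomial(k; k_{d_1-1},...,k_{d_r-1}) * \prod_{i=1}^{r} b_{d_i}^{k_{d_i-1}}, summed over all tuples with \sum_i (d_i-1) k_{d_i-1} = n and k = \sum_i k_{d_i-1}. In particular each a_n is a positive integer. -/

import Mathlib

open PowerSeries

/-- The series `z = ∑_{n≥0} a_n x^{n+1}`. -/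
noncomputable def coeffSeries (a : ℕ → ℚ) : PowerSeries ℚ :=
  PowerSeries.mk fun m => if m = 0 then 0 else a (m - 1)

namespace ColoredAux
open Polynomial Finset

variable {r : ℕ}

noncomputable def qpoly (d b : Fin r → ℕ) : ℚ[X] :=
  Polynomial.X - ∑ i : Fin r, Polynomial.C (b i : ℚ) * Polynomial.X ^ (d i)

lemma aeval_qpoly (d b : Fin r → ℕ) (u : PowerSeries ℚ) :
    Polynomial.aeval u (qpoly d b) = u - ∑ i : Fin r, PowerSeries.C (b i : ℚ) * u ^ (d i) := by
  simp [qpoly, map_sub, map_sum, map_mul, map_pow, Polynomial.aeval_C,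
    PowerSeries.algebraMap_apply, Algebra.algebraMap_self_apply]

lemma aux_dvd_aeval (N : ℕ) (p : ℚ[X]) (g : PowerSeries ℚ) (hg : constantCoeff g = 0)
    (hp : Polynomial.X ^ N ∣ p) : (X : PowerSeries ℚ) ^ N ∣ Polynomial.aeval g p := by
  obtain ⟨p', rfl⟩ := hp
  rw [map_mul, map_pow, Polynomial.aeval_X]
  exact Dvd.dvd.mul_right (pow_dvd_pow_of_dvd (PowerSeries.X_dvd_iff.mpr hg) N) _

lemma qpoly_sub (d b : Fin r → ℕ) (hd2 : ∀ i, 2 ≤ d i) (u v : PowerSeries ℚ)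
    (hu : constantCoeff u = 0) (hv : constantCoeff v = 0) :
    ∃ Cf : PowerSeries ℚ,
      Polynomial.aeval u (qpoly d b) - Polynomial.aeval v (qpoly d b) = (u - v) * Cf ∧
      constantCoeff Cf = 1 := by
  refine ⟨1 - ∑ i : Fin r, PowerSeries.C (b i : ℚ) *
      ∑ j ∈ range (d i), u ^ j * v ^ (d i - 1 - j), ?_, ?_⟩
  · rw [aeval_qpoly, aeval_qpoly]
    have key : ∀ i : Fin r, u ^ (d i) - v ^ (d i)
        = (∑ j ∈ range (d i), u ^ j * v ^ (d i - 1 - j)) * (u - v) := fun i =>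
      (geom_sum₂_mul u v (d i)).symm
    calc u - ∑ i : Fin r, PowerSeries.C (b i : ℚ) * u ^ (d i)
        - (v - ∑ i : Fin r, PowerSeries.C (b i : ℚ) * v ^ (d i))
        = (u - v) - ∑ i : Fin r, PowerSeries.C (b i : ℚ) * (u ^ (d i) - v ^ (d i)) := by
          simp only [mul_sub, Finset.sum_sub_distrib]; ring
      _ = (u - v) * (1 - ∑ i : Fin r, PowerSeries.C (b i : ℚ) *
            ∑ j ∈ range (d i), u ^ j * v ^ (d i - 1 - j)) := by
          simp_rw [key]
          rw [mul_sub, mul_one, Finset.mul_sum]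
          congr 1
          refine Finset.sum_congr rfl fun i _ => ?_
          ring
  · rw [map_sub, map_one, map_sum]
    rw [sub_eq_self]
    refine Finset.sum_eq_zero fun i _ => ?_
    rw [map_mul]
    convert mul_zero _
    rw [map_sum]
    refine Finset.sum_eq_zero fun j hj => ?_
    rw [map_mul, map_pow, map_pow, hu, hv]
    have hdi := hd2 i
    rcases Nat.eq_zero_or_pos j with h0 | h0
    · subst h0
      have : d i - 1 - 0 ≠ 0 := by omega
      rw [zero_pow this]
      ring
    · rw [zero_pow (by omega)]
      ring

lemma coe_eq_aeval_X (p : ℚ[X]) : (↑p : PowerSeries ℚ) = Polynomial.aeval (PowerSeries.X : PowerSeries ℚ) p := by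
  have : (Polynomial.coeToPowerSeries.algHom ℚ : ℚ[X] →ₐ[ℚ] PowerSeries ℚ)
      = Polynomial.aeval (PowerSeries.X : PowerSeries ℚ) := by
    apply Polynomial.algHom_ext
    simp [Polynomial.coeToPowerSeries.algHom_apply, Polynomial.coe_X]
  calc (↑p : PowerSeries ℚ) = Polynomial.coeToPowerSeries.algHom ℚ p := by
        simp [Polynomial.coeToPowerSeries.algHom_apply, PowerSeries.map_id]
    _ = Polynomial.aeval (PowerSeries.X : PowerSeries ℚ) p := by rw [this]

lemma aeval_trunc (g F : PowerSeries ℚ) (N : ℕ) :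
    Polynomial.aeval g (trunc N F) = ∑ m ∈ range N, (coeff m F) • g ^ m := by
  induction N with
  | zero => simp
  | succ N ih =>
      rw [trunc_succ, map_add, ih, Finset.sum_range_succ, Polynomial.aeval_monomial,
        Algebra.smul_def]

lemma q_cancel (d b : Fin r → ℕ) (hd2 : ∀ i, 2 ≤ d i) (u v : PowerSeries ℚ)
    (hu : constantCoeff u = 0) (hv : constantCoeff v = 0) (N : ℕ)
    (h : (X : PowerSeries ℚ) ^ N ∣ (Polynomial.aeval u (qpoly d b) - Polynomial.aeval v (qpoly d b))) :
    (X : PowerSeries ℚ) ^ N ∣ (u - v) := by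
  obtain ⟨Cf, hCf, hCf1⟩ := qpoly_sub d b hd2 u v hu hv
  have hunit : Cf * Cf⁻¹ = 1 := PowerSeries.mul_inv_cancel _ (by rw [hCf1]; norm_num)
  have : u - v = (Polynomial.aeval u (qpoly d b) - Polynomial.aeval v (qpoly d b)) * Cf⁻¹ := by
    rw [hCf, mul_assoc, hunit, mul_one]
  rw [this]
  exact h.mul_right _

lemma constCoeff_fser (d b : Fin r → ℕ) (hd2 : ∀ i, 2 ≤ d i) :
    constantCoeff (Polynomial.aeval (PowerSeries.X : PowerSeries ℚ) (qpoly d b)) = 0 := by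
  rw [aeval_qpoly, map_sub, map_sum]
  simp only [map_mul, map_pow, PowerSeries.constantCoeff_X, PowerSeries.constantCoeff_C]
  have : ∀ i : Fin r, ((b i : ℚ)) * (0:ℚ) ^ (d i) = 0 := fun i => by
    rw [zero_pow (by have := hd2 i; omega)]; ring
  simp [this]

lemma truncEval (d b : Fin r → ℕ) (hd2 : ∀ i, 2 ≤ d i) (F : PowerSeries ℚ)
    (hF0 : constantCoeff F = 0)
    (hinvq : Polynomial.aeval F (qpoly d b) = PowerSeries.X) (n : ℕ) :
    (PowerSeries.X : PowerSeries ℚ) ^ (n + 2) ∣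
      (Polynomial.aeval (Polynomial.aeval (PowerSeries.X : PowerSeries ℚ) (qpoly d b)) (trunc (n + 2) F)
        - PowerSeries.X) := by
  set fser := Polynomial.aeval (PowerSeries.X : PowerSeries ℚ) (qpoly d b) with hfser
  have hfser0 : constantCoeff fser = 0 := constCoeff_fser d b hd2
  set P : ℚ[X] := trunc (n + 2) F with hP
  have hP0 : constantCoeff (↑P : PowerSeries ℚ) = 0 := by
    rw [← coeff_zero_eq_constantCoeff_apply, Polynomial.coeff_coe, hP, coeff_trunc,
      if_pos (by omega), coeff_zero_eq_constantCoeff_apply, hF0]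
  have h1 : (PowerSeries.X : PowerSeries ℚ) ^ (n + 2) ∣ ((↑P : PowerSeries ℚ) - F) := by
    rw [PowerSeries.X_pow_dvd_iff]
    intro m hm
    rw [map_sub, Polynomial.coeff_coe, coeff_trunc, if_pos hm, sub_self]
  have h2 : (PowerSeries.X : PowerSeries ℚ) ^ (n + 2) ∣
      (Polynomial.aeval (↑P : PowerSeries ℚ) (qpoly d b) - PowerSeries.X) := by
    obtain ⟨Cf, hCf, _⟩ := qpoly_sub d b hd2 (↑P) F hP0 hF0
    nth_rewrite 2 [← hinvq]
    rw [hCf]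
    exact h1.mul_right _
  -- polynomial g
  set g : ℚ[X] := (qpoly d b).comp P with hg
  have hgcoe : (↑g : PowerSeries ℚ) = Polynomial.aeval (↑P : PowerSeries ℚ) (qpoly d b) := by
    rw [coe_eq_aeval_X, hg, Polynomial.aeval_comp, ← coe_eq_aeval_X]
  have hE : Polynomial.X ^ (n + 2) ∣ (g - Polynomial.X) := by
    rw [Polynomial.X_pow_dvd_iff]
    intro j hj
    have : PowerSeries.coeff j ((↑g : PowerSeries ℚ) - PowerSeries.X) = 0 := by
      rw [PowerSeries.X_pow_dvd_iff] at h2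
      rw [hgcoe]; exact h2 j hj
    rw [map_sub, Polynomial.coeff_coe] at this
    rw [Polynomial.coeff_sub]
    rwa [← Polynomial.coe_X (R := ℚ), Polynomial.coeff_coe] at this
  have h3 : (PowerSeries.X : PowerSeries ℚ) ^ (n + 2) ∣ Polynomial.aeval fser (g - Polynomial.X) :=
    aux_dvd_aeval _ _ _ hfser0 hE
  rw [map_sub, Polynomial.aeval_X] at h3
  have h4 : Polynomial.aeval fser g = Polynomial.aeval (Polynomial.aeval fser P) (qpoly d b) := by
    rw [hg, Polynomial.aeval_comp]
  set u := Polynomial.aeval fser P with hu'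
  have hu0 : constantCoeff u = 0 := by
    rw [hu', hP, aeval_trunc, map_sum]
    refine Finset.sum_eq_zero fun m _ => ?_
    rcases Nat.eq_zero_or_pos m with h0 | h0
    · subst h0
      simp [hF0]
    · rw [PowerSeries.smul_eq_C_mul, map_mul, map_pow, hfser0, zero_pow (by omega), mul_zero]
  have h5 : (PowerSeries.X : PowerSeries ℚ) ^ (n + 2) ∣
      (Polynomial.aeval u (qpoly d b) - Polynomial.aeval PowerSeries.X (qpoly d b)) := by
    rw [← h4, ← hfser]
    exact h3
  have := q_cancel d b hd2 u PowerSeries.X hu0 (by simp) (n + 2) h5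
  exact this


noncomputable def Bser (d b : Fin r → ℕ) : PowerSeries ℚ :=
  ∑ i : Fin r, PowerSeries.C (b i : ℚ) * PowerSeries.X ^ (d i - 1)

lemma constCoeff_Bser (d b : Fin r → ℕ) (hd2 : ∀ i, 2 ≤ d i) :
    constantCoeff (Bser d b) = 0 := by
  rw [Bser, map_sum]
  refine Finset.sum_eq_zero fun i _ => ?_
  rw [map_mul, map_pow, PowerSeries.constantCoeff_X, zero_pow (by have := hd2 i; omega), mul_zero]

lemma oneSubB_mul_inv (d b : Fin r → ℕ) (hd2 : ∀ i, 2 ≤ d i) :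
    (1 - Bser d b) * (1 - Bser d b)⁻¹ = 1 :=
  PowerSeries.mul_inv_cancel _ (by
    rw [map_sub, map_one, constCoeff_Bser d b hd2]; norm_num)

lemma constCoeff_Sinv (d b : Fin r → ℕ) (hd2 : ∀ i, 2 ≤ d i) :
    constantCoeff (1 - Bser d b)⁻¹ = 1 := by
  have h := congrArg (PowerSeries.constantCoeff) (oneSubB_mul_inv d b hd2)
  rw [map_mul, map_sub, map_one, constCoeff_Bser d b hd2, sub_zero, one_mul] at h
  exact h

lemma fser_eq (d b : Fin r → ℕ) (hd2 : ∀ i, 2 ≤ d i) :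
    Polynomial.aeval (PowerSeries.X : PowerSeries ℚ) (qpoly d b)
      = PowerSeries.X * (1 - Bser d b) := by
  rw [aeval_qpoly, Bser, mul_sub, mul_one, Finset.mul_sum]
  congr 1
  refine Finset.sum_congr rfl fun i _ => ?_
  rw [mul_comm PowerSeries.X, mul_assoc]
  congr 1
  rw [← pow_succ, Nat.sub_add_cancel (by have := hd2 i; omega)]

lemma deriv_fser (d b : Fin r → ℕ) :
    d⁄dX ℚ (PowerSeries.X * (1 - Bser d b))
      = (1 - Bser d b) - PowerSeries.X * (d⁄dX ℚ (Bser d b)) := by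
  rw [Derivation.leibniz, map_sub, Derivation.map_one_eq_zero, PowerSeries.derivative_X]
  simp only [smul_eq_mul, zero_sub, mul_one]
  ring

lemma deriv_S (d b : Fin r → ℕ) (hd2 : ∀ i, 2 ≤ d i) :
    d⁄dX ℚ (1 - Bser d b)⁻¹
      = d⁄dX ℚ (Bser d b) * ((1 - Bser d b)⁻¹) ^ 2 := by
  set B := Bser d b
  set S := (1 - B)⁻¹
  have h1 : (1 - B) * S = 1 := oneSubB_mul_inv d b hd2
  have h2 := congrArg (d⁄dX ℚ) h1
  rw [Derivation.leibniz, Derivation.map_one_eq_zero, map_sub, Derivation.map_one_eq_zero] at h2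
  simp only [smul_eq_mul, zero_sub] at h2
  -- h2 : (1 - B) * dS + S * (- dB) = 0
  calc d⁄dX ℚ S = ((1 - B) * S) * d⁄dX ℚ S := by rw [h1, one_mul]
    _ = S * ((1 - B) * d⁄dX ℚ S) := by ring
    _ = S * (S * d⁄dX ℚ B) := by rw [show (1 - B) * d⁄dX ℚ S = S * d⁄dX ℚ B by linear_combination h2]
    _ = d⁄dX ℚ B * S ^ 2 := by ring

lemma key_coeff (d b : Fin r → ℕ) (hd2 : ∀ i, 2 ≤ d i) (j : ℕ) :
    coeff j (d⁄dX ℚ (PowerSeries.X * (1 - Bser d b)) * ((1 - Bser d b)⁻¹) ^ (j + 1))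
      = if j = 0 then 1 else 0 := by
  set B := Bser d b with hB
  set S := (1 - B)⁻¹ with hSdef
  have h1 : (1 - B) * S = 1 := oneSubB_mul_inv d b hd2
  rcases Nat.eq_zero_or_pos j with h0 | h0
  · subst h0
    rw [if_pos rfl, pow_one]
    rw [coeff_zero_eq_constantCoeff_apply, map_mul, deriv_fser, map_sub, map_mul,
      PowerSeries.constantCoeff_X, zero_mul, sub_zero, map_sub, map_one,
      constCoeff_Bser d b hd2, constCoeff_Sinv d b hd2]
    norm_num
  · rw [if_neg (by omega)]
    have hj : j - 1 + 1 = j := Nat.succ_pred_eq_of_pos h0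
    have hpow2 : S ^ (j + 1) = S ^ 2 * S ^ (j - 1) := by
      rw [← pow_add]; congr 1; omega
    have expand : d⁄dX ℚ (PowerSeries.X * (1 - B)) * S ^ (j + 1)
        = S ^ j - PowerSeries.X * (S ^ (j - 1) * d⁄dX ℚ S) := by
      rw [deriv_fser, sub_mul]
      congr 1
      · calc (1 - B) * S ^ (j + 1) = ((1 - B) * S) * S ^ j := by ring
          _ = S ^ j := by rw [h1, one_mul]
      · rw [hpow2, deriv_S d b hd2]
        ring
    rw [expand, map_sub]
    have hXmul : coeff j (PowerSeries.X * (S ^ (j - 1) * d⁄dX ℚ S))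
        = coeff (j - 1) (S ^ (j - 1) * d⁄dX ℚ S) := by
      conv_lhs => rw [← hj, coeff_succ_X_mul]
      norm_num
    have hjQ : (j : ℚ) ≠ 0 := by
      exact_mod_cast (by omega : j ≠ 0)
    have hl : d⁄dX ℚ (S ^ j) = j • S ^ (j - 1) • d⁄dX ℚ S := Derivation.leibniz_pow (D := d⁄dX ℚ) S j
    have h5 := congrArg (PowerSeries.coeff (j - 1)) hl
    rw [PowerSeries.coeff_derivative, hj, map_nsmul] at h5
    simp only [smul_eq_mul, nsmul_eq_mul] at h5
    rw [show ((j - 1 : ℕ) : ℚ) + 1 = (j : ℚ) by exact_mod_cast congrArg (Nat.cast (R := ℚ)) hj] at h5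
    have hDpow : coeff (j - 1) (S ^ (j - 1) * d⁄dX ℚ S) = coeff j (S ^ j) := by
      apply mul_left_cancel₀ hjQ
      linear_combination -h5
    rw [hXmul, hDpow, sub_self]


lemma term_coeff (d b : Fin r → ℕ) (hd2 : ∀ i, 2 ≤ d i) (n m : ℕ) (hm : m < n + 2) :
    coeff n (d⁄dX ℚ ((Polynomial.aeval (PowerSeries.X : PowerSeries ℚ) (qpoly d b)) ^ m)
        * ((1 - Bser d b)⁻¹) ^ (n + 1))
      = if m = n + 1 then ((n : ℚ) + 1) else 0 := by
  set B := Bser d b with hB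
  set S := (1 - B)⁻¹ with hSdef
  have h1 : (1 - B) * S = 1 := oneSubB_mul_inv d b hd2
  rw [fser_eq d b hd2]
  rcases Nat.eq_zero_or_pos m with h0 | h0
  · subst h0
    rw [pow_zero, Derivation.map_one_eq_zero, zero_mul, map_zero, if_neg (by omega)]
  · set fs := PowerSeries.X * (1 - B) with hfs
    have hk : m - 1 ≤ n := by omega
    set k := m - 1 with hkdef
    have hm1 : m = k + 1 := by omega
    have hl : d⁄dX ℚ (fs ^ m) = m • (fs ^ k * d⁄dX ℚ fs) := by
      rw [Derivation.leibniz_pow (D := d⁄dX ℚ) fs m]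
      simp only [smul_eq_mul]
      rfl
    have hrearr : fs ^ k * d⁄dX ℚ fs * S ^ (n + 1)
        = PowerSeries.X ^ k * (d⁄dX ℚ fs * S ^ ((n - k) + 1)) := by
      rw [hfs]
      have : (PowerSeries.X * (1 - B)) ^ k = PowerSeries.X ^ k * (1 - B) ^ k := mul_pow _ _ _
      rw [this]
      have hS : S ^ (n + 1) = S ^ ((n - k) + 1) * S ^ k := by
        rw [← pow_add]; congr 1; omega
      rw [hS]
      have h2 : (1 - B) ^ k * S ^ k = 1 := by rw [← mul_pow, h1, one_pow]
      calc PowerSeries.X ^ k * (1 - B) ^ k * d⁄dX ℚ (PowerSeries.X * (1 - B))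
            * (S ^ ((n - k) + 1) * S ^ k)
          = PowerSeries.X ^ k * (d⁄dX ℚ (PowerSeries.X * (1 - B)) * S ^ ((n - k) + 1))
            * ((1 - B) ^ k * S ^ k) := by ring
        _ = PowerSeries.X ^ k * (d⁄dX ℚ (PowerSeries.X * (1 - B)) * S ^ ((n - k) + 1)) := by
            rw [h2, mul_one]
    have hcoeff : PowerSeries.coeff n (PowerSeries.X ^ k * (d⁄dX ℚ fs * S ^ ((n - k) + 1)))
        = PowerSeries.coeff (n - k) (d⁄dX ℚ fs * S ^ ((n - k) + 1)) := by
      have h' := PowerSeries.coeff_X_pow_mul (d⁄dX ℚ fs * S ^ ((n - k) + 1)) k (n - k)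
      rwa [show (n - k) + k = n from by omega] at h'
    have hkey := key_coeff d b hd2 (n - k)
    rw [hl, smul_mul_assoc, map_nsmul, hrearr, hcoeff]
    rw [hkey]
    rcases eq_or_ne m (n + 1) with he | he
    · rw [if_pos he, if_pos (by omega)]
      have : (m : ℚ) = (n : ℚ) + 1 := by exact_mod_cast congrArg (Nat.cast (R := ℚ)) he
      simp [this]
    · rw [if_neg he, if_neg (by omega)]
      simp

lemma main_identity (d b : Fin r → ℕ) (hd2 : ∀ i, 2 ≤ d i) (F : PowerSeries ℚ)
    (hF0 : constantCoeff F = 0)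
    (hinvq : Polynomial.aeval F (qpoly d b) = PowerSeries.X) (n : ℕ) :
    ((n : ℚ) + 1) * coeff (n + 1) F = coeff n (((1 - Bser d b)⁻¹) ^ (n + 1)) := by
  set B := Bser d b with hB
  set S := (1 - B)⁻¹ with hSdef
  set fs := Polynomial.aeval (PowerSeries.X : PowerSeries ℚ) (qpoly d b) with hfs
  set u := Polynomial.aeval fs (trunc (n + 2) F) with hudef
  have hu_sum : u = ∑ m ∈ range (n + 2), (coeff m F) • fs ^ m := aeval_trunc fs F (n + 2)
  obtain ⟨w, hw⟩ := truncEval d b hd2 F hF0 hinvq n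
  have hu : u = PowerSeries.X + PowerSeries.X ^ (n + 2) * w := by linear_combination hw
  have hdvd : (PowerSeries.X : PowerSeries ℚ) ^ (n + 1) ∣ (d⁄dX ℚ u - 1) := by
    have hdu : d⁄dX ℚ u - 1 = PowerSeries.X ^ (n + 2) * d⁄dX ℚ w
        + w * ((n + 2) • (PowerSeries.X ^ (n + 1) * d⁄dX ℚ (PowerSeries.X : PowerSeries ℚ))) := by
      rw [hu, map_add, PowerSeries.derivative_X, Derivation.leibniz,
        Derivation.leibniz_pow (D := d⁄dX ℚ) (PowerSeries.X : PowerSeries ℚ) (n + 2)]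
      simp only [smul_eq_mul, PowerSeries.derivative_X, mul_one,
        show n + 2 - 1 = n + 1 from by omega]
      ring
    rw [hdu]
    refine dvd_add (Dvd.dvd.mul_right (pow_dvd_pow _ (by omega)) _) ?_
    refine Dvd.dvd.mul_left ?_ w
    rw [nsmul_eq_mul]
    exact Dvd.dvd.mul_left (Dvd.dvd.mul_right dvd_rfl _) _
  have way1 : coeff n (d⁄dX ℚ u * S ^ (n + 1)) = coeff n (S ^ (n + 1)) := by
    have hsplit : d⁄dX ℚ u * S ^ (n + 1) = S ^ (n + 1) + (d⁄dX ℚ u - 1) * S ^ (n + 1) := by ring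
    rw [hsplit, map_add]
    have h0 : coeff n ((d⁄dX ℚ u - 1) * S ^ (n + 1)) = 0 := by
      have hd' : (PowerSeries.X : PowerSeries ℚ) ^ (n + 1) ∣ (d⁄dX ℚ u - 1) * S ^ (n + 1) :=
        hdvd.mul_right _
      rw [PowerSeries.X_pow_dvd_iff] at hd'
      exact hd' n (by omega)
    rw [h0, add_zero]
  have way2 : coeff n (d⁄dX ℚ u * S ^ (n + 1)) = ((n : ℚ) + 1) * coeff (n + 1) F := by
    have hdu2 : d⁄dX ℚ u = ∑ m ∈ range (n + 2), (coeff m F) • d⁄dX ℚ (fs ^ m) := by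
      rw [hu_sum, map_sum]
      exact Finset.sum_congr rfl fun m _ => Derivation.map_smul _ _ _
    rw [hdu2, Finset.sum_mul, map_sum]
    have : ∀ m ∈ range (n + 2),
        coeff n ((coeff m F • d⁄dX ℚ (fs ^ m)) * S ^ (n + 1))
          = coeff m F * (if m = n + 1 then ((n : ℚ) + 1) else 0) := by
      intro m hm
      rw [smul_mul_assoc, map_smul, smul_eq_mul, term_coeff d b hd2 n m (Finset.mem_range.mp hm)]
    rw [Finset.sum_congr rfl this]
    simp only [mul_ite, mul_zero]
    rw [Finset.sum_ite_eq' (range (n + 2)) (n + 1) (fun m => coeff m F * ((n : ℚ) + 1))]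
    rw [if_pos (Finset.mem_range.mpr (by omega))]
    ring
  rw [← way1, way2]


lemma coeff_geom_sum (n : ℕ) (c : ℕ → ℚ) (j : ℕ) (hj : j ≤ n) :
    coeff j (∑ k ∈ range (n + 1), PowerSeries.C (c k) * PowerSeries.X ^ k) = c j := by
  rw [map_sum]
  have : ∀ k ∈ range (n + 1), coeff j (PowerSeries.C (c k) * PowerSeries.X ^ k)
      = if k = j then c k else 0 := by
    intro k _
    rw [PowerSeries.coeff_C_mul, PowerSeries.coeff_X_pow]
    by_cases h : j = k
    · rw [if_pos h, if_pos h.symm, mul_one]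
    · rw [if_neg h, if_neg (Ne.symm h), mul_zero]
  rw [Finset.sum_congr rfl this, Finset.sum_ite_eq' (range (n + 1)) j c,
    if_pos (Finset.mem_range.mpr (by omega))]

lemma coeff_S_pow (d b : Fin r → ℕ) (hd2 : ∀ i, 2 ≤ d i) (n : ℕ) :
    coeff n (((1 - Bser d b)⁻¹) ^ (n + 1))
      = ∑ k ∈ range (n + 1), (((n + k).choose n : ℕ) : ℚ) * coeff n ((Bser d b) ^ k) := by
  set B := Bser d b with hB
  set S := (1 - B)⁻¹ with hSdef
  have h1 : (1 - B) * S = 1 := oneSubB_mul_inv d b hd2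
  have hB0 : constantCoeff B = 0 := constCoeff_Bser d b hd2
  -- the polynomial G
  set Gpoly : Polynomial ℚ := (1 - Polynomial.X) ^ (n + 1) *
      ∑ k ∈ range (n + 1), Polynomial.C (((n + k).choose n : ℕ) : ℚ) * Polynomial.X ^ k with hG
  have hM : (PowerSeries.mk fun k => (((n + k).choose n : ℕ) : ℚ)) * ((1 - PowerSeries.X) ^ (n + 1)) = 1 := by
    exact_mod_cast PowerSeries.mk_add_choose_mul_one_sub_pow_eq_one (S := ℚ) (d := n)
  have hGcoe : (↑Gpoly : PowerSeries ℚ) = (1 - PowerSeries.X) ^ (n + 1) *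
      ∑ k ∈ range (n + 1), PowerSeries.C (((n + k).choose n : ℕ) : ℚ) * PowerSeries.X ^ k := by
    rw [hG]
    rw [Polynomial.coe_mul, Polynomial.coe_pow, Polynomial.coe_sub, Polynomial.coe_one,
      Polynomial.coe_X]
    congr 1
    rw [← Polynomial.coeToPowerSeries.ringHom_apply, map_sum]
    refine Finset.sum_congr rfl fun k _ => ?_
    rw [map_mul, map_pow, Polynomial.coeToPowerSeries.ringHom_apply,
      Polynomial.coeToPowerSeries.ringHom_apply, Polynomial.coe_X, Polynomial.coe_C]
  have hGlow : ∀ j, j ≤ n → Polynomial.coeff Gpoly j = (if j = 0 then 1 else 0) := by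
    intro j hj
    have htail : (PowerSeries.X : PowerSeries ℚ) ^ (n + 1) ∣
        ((PowerSeries.mk fun k => (((n + k).choose n : ℕ) : ℚ))
          - ∑ k ∈ range (n + 1), PowerSeries.C (((n + k).choose n : ℕ) : ℚ) * PowerSeries.X ^ k) := by
      rw [PowerSeries.X_pow_dvd_iff]
      intro m hm
      rw [map_sub, PowerSeries.coeff_mk, coeff_geom_sum n _ m (by omega), sub_self]
    have hsplit : (↑Gpoly : PowerSeries ℚ) = 1 - (1 - PowerSeries.X) ^ (n + 1) *
        ((PowerSeries.mk fun k => (((n + k).choose n : ℕ) : ℚ))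
          - ∑ k ∈ range (n + 1), PowerSeries.C (((n + k).choose n : ℕ) : ℚ) * PowerSeries.X ^ k) := by
      rw [hGcoe]
      have := hM
      ring_nf
      linear_combination (1 : PowerSeries ℚ) * hM
    have : coeff j (↑Gpoly : PowerSeries ℚ) = if j = 0 then 1 else 0 := by
      rw [hsplit, map_sub, PowerSeries.coeff_one]
      obtain ⟨w, hw⟩ := htail
      rw [hw]
      have : PowerSeries.coeff j ((1 - PowerSeries.X) ^ (n + 1) * (PowerSeries.X ^ (n + 1) * w)) = 0 := by
        have hdvd : (PowerSeries.X : PowerSeries ℚ) ^ (n + 1) ∣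
            (1 - PowerSeries.X) ^ (n + 1) * (PowerSeries.X ^ (n + 1) * w) :=
          Dvd.dvd.mul_left (Dvd.dvd.mul_right dvd_rfl w) _
        rw [PowerSeries.X_pow_dvd_iff] at hdvd
        exact hdvd j (by omega)
      rw [this, sub_zero]
    rwa [Polynomial.coeff_coe] at this
  -- evaluate at B
  have hEdvd : (PowerSeries.X : PowerSeries ℚ) ^ (n + 1) ∣ Polynomial.aeval B (Gpoly - 1) := by
    apply aux_dvd_aeval _ _ _ hB0
    rw [Polynomial.X_pow_dvd_iff]
    intro j hj
    rw [Polynomial.coeff_sub, hGlow j (by omega)]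
    rcases eq_or_ne j 0 with h0 | h0
    · subst h0; simp
    · simp [Polynomial.coeff_one, h0]
  have hGB : Polynomial.aeval B Gpoly = (1 - B) ^ (n + 1) *
      ∑ k ∈ range (n + 1), PowerSeries.C (((n + k).choose n : ℕ) : ℚ) * B ^ k := by
    rw [hG, map_mul, map_pow, map_sub, map_one, Polynomial.aeval_X, map_sum]
    congr 1
    refine Finset.sum_congr rfl fun k _ => ?_
    rw [map_mul, map_pow, Polynomial.aeval_C, Polynomial.aeval_X]
    congr 1
  have hfinal : (∑ k ∈ range (n + 1), PowerSeries.C (((n + k).choose n : ℕ) : ℚ) * B ^ k)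
      = S ^ (n + 1) + S ^ (n + 1) * Polynomial.aeval B (Gpoly - 1) := by
    have hSpow : S ^ (n + 1) * (1 - B) ^ (n + 1) = 1 := by
      rw [← mul_pow, mul_comm S, h1, one_pow]
    have h2 : Polynomial.aeval B (Gpoly - 1) = Polynomial.aeval B Gpoly - 1 := by
      rw [map_sub, map_one]
    rw [h2, hGB]
    calc (∑ k ∈ range (n + 1), PowerSeries.C (((n + k).choose n : ℕ) : ℚ) * B ^ k)
        = (S ^ (n + 1) * (1 - B) ^ (n + 1)) *
            ∑ k ∈ range (n + 1), PowerSeries.C (((n + k).choose n : ℕ) : ℚ) * B ^ k := by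
          rw [hSpow, one_mul]
      _ = S ^ (n + 1) + S ^ (n + 1) * ((1 - B) ^ (n + 1) *
            (∑ k ∈ range (n + 1), PowerSeries.C (((n + k).choose n : ℕ) : ℚ) * B ^ k) - 1) := by
          ring
  have := congrArg (PowerSeries.coeff n) hfinal
  rw [map_add] at this
  have hzero : coeff n (S ^ (n + 1) * Polynomial.aeval B (Gpoly - 1)) = 0 := by
    have hdvd : (PowerSeries.X : PowerSeries ℚ) ^ (n + 1) ∣
        S ^ (n + 1) * Polynomial.aeval B (Gpoly - 1) := hEdvd.mul_left _
    rw [PowerSeries.X_pow_dvd_iff] at hdvd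
    exact hdvd n (by omega)
  rw [hzero, add_zero] at this
  rw [← this, map_sum]
  refine Finset.sum_congr rfl fun k _ => ?_
  rw [PowerSeries.coeff_C_mul]


lemma coeff_B_pow (d b : Fin r → ℕ) (hd2 : ∀ i, 2 ≤ d i) (n k : ℕ) :
    coeff n ((Bser d b) ^ k)
      = ∑ v ∈ (Finset.piAntidiag (Finset.univ : Finset (Fin r)) k).filter
          (fun v => ∑ i, (d i - 1) * v i = n),
        ((Nat.multinomial Finset.univ v : ℕ) : ℚ) * ∏ i : Fin r, ((b i : ℚ)) ^ (v i) := by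
  rw [Bser, Finset.sum_pow_eq_sum_piAntidiag, map_sum, Finset.sum_filter]
  refine Finset.sum_congr rfl fun v hv => ?_
  have hprod : ∏ i : Fin r, (PowerSeries.C (b i : ℚ) * PowerSeries.X ^ (d i - 1)) ^ (v i)
      = PowerSeries.C (∏ i : Fin r, ((b i : ℚ)) ^ (v i))
        * PowerSeries.X ^ (∑ i, (d i - 1) * v i) := by
    calc ∏ i : Fin r, (PowerSeries.C (b i : ℚ) * PowerSeries.X ^ (d i - 1)) ^ (v i)
        = ∏ i : Fin r, (PowerSeries.C ((b i : ℚ) ^ (v i))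
            * PowerSeries.X ^ ((d i - 1) * (v i))) := by
          refine Finset.prod_congr rfl fun i _ => ?_
          rw [mul_pow, map_pow, pow_mul]
      _ = (∏ i : Fin r, PowerSeries.C ((b i : ℚ) ^ (v i)))
            * ∏ i : Fin r, PowerSeries.X ^ ((d i - 1) * (v i)) := Finset.prod_mul_distrib
      _ = PowerSeries.C (∏ i : Fin r, ((b i : ℚ)) ^ (v i))
            * PowerSeries.X ^ (∑ i, (d i - 1) * v i) := by
          rw [map_prod, Finset.prod_pow_eq_pow_sum]
  have hcast : ((Nat.multinomial Finset.univ v : ℕ) : PowerSeries ℚ)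
      = PowerSeries.C ((Nat.multinomial Finset.univ v : ℕ) : ℚ) := by
    rw [map_natCast]
  rw [hprod, hcast, ← mul_assoc, ← map_mul, PowerSeries.coeff_C_mul,
    PowerSeries.coeff_X_pow]
  by_cases h : ∑ i, (d i - 1) * v i = n
  · rw [if_pos h, if_pos h.symm, mul_one]
  · rw [if_neg h, if_neg (fun hh => h hh.symm), mul_zero]

lemma reindex_sum (d b : Fin r → ℕ) (hd2 : ∀ i, 2 ≤ d i) (n : ℕ)
    (g : (Fin r → ℕ) → ℚ) :
    ∑ k ∈ range (n + 1), ∑ v ∈ (Finset.piAntidiag (Finset.univ : Finset (Fin r)) k).filter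
        (fun v => ∑ i, (d i - 1) * v i = n), g v
      = ∑ v ∈ (Fintype.piFinset fun _ : Fin r => Finset.range (n + 1)).filter
          (fun v => ∑ i, (d i - 1) * v i = n), g v := by
  rw [← Finset.sum_biUnion]
  · congr 1
    ext v
    simp only [Finset.mem_biUnion, Finset.mem_filter, Finset.mem_piAntidiag, Finset.mem_range,
      Fintype.mem_piFinset]
    constructor
    · rintro ⟨k, hk, ⟨hsum, -⟩, hcond⟩
      refine ⟨fun i => ?_, hcond⟩
      have h1 : v i ≤ (d i - 1) * v i :=
        Nat.le_mul_of_pos_left _ (by have := hd2 i; omega)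
      have h2 : (d i - 1) * v i ≤ ∑ j, (d j - 1) * v j :=
        Finset.single_le_sum (f := fun j => (d j - 1) * v j) (fun j _ => Nat.zero_le _)
          (Finset.mem_univ i)
      omega
    · rintro ⟨hv, hcond⟩
      refine ⟨∑ i, v i, ?_, ⟨rfl, fun i _ => Finset.mem_univ i⟩, hcond⟩
      have : ∑ i, v i ≤ ∑ i, (d i - 1) * v i :=
        Finset.sum_le_sum fun i _ => Nat.le_mul_of_pos_left _ (by have := hd2 i; omega)
      omega
  · intro k1 _ k2 _ hne
    simp only [Function.onFun]
    rw [Finset.disjoint_left]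
    intro v h1 h2
    rw [Finset.mem_filter, Finset.mem_piAntidiag] at h1 h2
    exact hne (h1.1.1.symm.trans h2.1.1)

end ColoredAux

open ColoredAux

/-- Colored polygonal partitions: let `2 ≤ d_1 < ⋯ < d_r`, let
`b_{d_1},…,b_{d_r}` be positive integers, and let `z = ∑_{n≥0} a_n x^{n+1}` be
the compositional inverse of `x = z - ∑_i b_{d_i} z^{d_i}`
(i.e. `F - ∑_i b_{d_i} F^{d_i} = X`).  Then
`a_n = ∑_λ (1/(n+1)) C(n+k,k) ⬝ multinomial(k; k_{d_1-1},…,k_{d_r-1}) ⬝ ∏_i b_{d_i}^{k_{d_i-1}}`,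
summed over tuples with `∑_i (d_i-1) k_{d_i-1} = n` and `k = ∑_i k_{d_i-1}`;
in particular each `a_n` is a (nonnegative) integer. -/
theorem colored_reverse_series_counts_dissections (r : ℕ) (d : Fin r → ℕ)
    (hd2 : ∀ i, 2 ≤ d i) (hmono : StrictMono d)
    (b : Fin r → ℕ) (hb : ∀ i, 1 ≤ b i) (a : ℕ → ℚ)
    (hinv : coeffSeries a - ∑ i : Fin r, (b i : ℚ) • (coeffSeries a) ^ (d i) = X) :
    ∀ n : ℕ,
      (a n = ∑ v ∈ (Fintype.piFinset fun _ : Fin r => Finset.range (n + 1)).filter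
          (fun v => ∑ i, (d i - 1) * v i = n),
        (1 / ((n : ℚ) + 1)) * (((n + ∑ i, v i).choose (∑ i, v i) : ℕ) : ℚ) *
          ((Nat.multinomial Finset.univ v : ℕ) : ℚ) *
          ∏ i : Fin r, ((b i : ℚ)) ^ (v i)) ∧
      ∃ m : ℕ, a n = (m : ℚ) := by
  set F := coeffSeries a with hF
  have hF0 : PowerSeries.constantCoeff F = 0 := by
    rw [hF, coeffSeries, ← coeff_zero_eq_constantCoeff_apply, PowerSeries.coeff_mk]
    simp
  have hcoeffF : ∀ m : ℕ, coeff (m + 1) F = a m := fun m => by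
    rw [hF, coeffSeries, PowerSeries.coeff_mk]
    simp
  have hinvq : Polynomial.aeval F (qpoly d b) = PowerSeries.X := by
    rw [aeval_qpoly, ← hinv]
    congr 1
    exact Finset.sum_congr rfl fun i _ => (PowerSeries.smul_eq_C_mul _ _).symm
  have hnat : ∀ n : ℕ, a n ∈ (Nat.castRingHom ℚ).rangeS := by
    intro n
    induction n using Nat.strong_induction_on with
    | _ n IH =>
    set R := (Nat.castRingHom ℚ).rangeS with hR
    have hcF : ∀ p : ℕ, p ≤ n → coeff p F ∈ R := by
      intro p hp
      rcases Nat.eq_zero_or_pos p with h0 | h0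
      · subst h0
        rw [coeff_zero_eq_constantCoeff_apply, hF0]
        exact zero_mem _
      · have hp1 : p - 1 + 1 = p := by omega
        rw [← hp1, hcoeffF]
        exact IH (p - 1) (by omega)
    have hpow : ∀ t : ℕ, ∀ N, N ≤ n → coeff N (F ^ (t + 1)) ∈ R := by
      intro t
      induction t with
      | zero =>
          intro N hN
          rw [pow_one]
          exact hcF N hN
      | succ t iht =>
          intro N hN
          rw [pow_succ, PowerSeries.coeff_mul]
          refine sum_mem fun c hc => ?_
          have hcsum := Finset.HasAntidiagonal.mem_antidiagonal.mp hc
          exact mul_mem (iht c.1 (by omega)) (hcF c.2 (by omega))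
    have htop : ∀ t : ℕ, 1 ≤ t → coeff (n + 1) (F ^ (t + 1)) ∈ R := by
      intro t ht
      rw [pow_succ, PowerSeries.coeff_mul]
      refine sum_mem fun c hc => ?_
      have hcsum := Finset.HasAntidiagonal.mem_antidiagonal.mp hc
      rcases Nat.eq_zero_or_pos c.1 with h1 | h1
      · have : coeff c.1 (F ^ t) = 0 := by
          rw [h1, coeff_zero_eq_constantCoeff_apply, map_pow, hF0, zero_pow (by omega)]
        rw [this, zero_mul]
        exact zero_mem _
      · rcases Nat.eq_zero_or_pos c.2 with h2 | h2
        · have : coeff c.2 F = 0 := by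
            rw [h2, coeff_zero_eq_constantCoeff_apply, hF0]
          rw [this, mul_zero]
          exact zero_mem _
        · have ht' : t = (t - 1) + 1 := by omega
          rw [ht']
          exact mul_mem (hpow (t - 1) c.1 (by omega)) (hcF c.2 (by omega))
    have hrec := congrArg (coeff (n + 1)) hinv
    rw [map_sub, map_sum] at hrec
    simp only [map_smul, smul_eq_mul] at hrec
    have hrec2 : a n = coeff (n + 1) PowerSeries.X
        + ∑ i : Fin r, (b i : ℚ) * coeff (n + 1) (F ^ (d i)) := by
      rw [← hcoeffF n]
      linear_combination hrec
    rw [hrec2]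
    refine add_mem ?_ (sum_mem fun i _ => mul_mem ?_ ?_)
    · rw [PowerSeries.coeff_X]
      split_ifs
      exacts [one_mem _, zero_mem _]
    · exact RingHom.mem_rangeS.mpr ⟨b i, by simp⟩
    · have hdi : d i = (d i - 1) + 1 := by have := hd2 i; omega
      rw [hdi]
      exact htop (d i - 1) (by have := hd2 i; omega)
  intro n
  constructor
  · have hmain := main_identity d b hd2 F hF0 hinvq n
    rw [hcoeffF n, coeff_S_pow d b hd2 n] at hmain
    have step1 : ∀ k ∈ Finset.range (n + 1),
        (((n + k).choose n : ℕ) : ℚ) * coeff n ((Bser d b) ^ k)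
        = ∑ v ∈ (Finset.piAntidiag (Finset.univ : Finset (Fin r)) k).filter
            (fun v => ∑ i, (d i - 1) * v i = n),
          (((n + ∑ i, v i).choose (∑ i, v i) : ℕ) : ℚ) *
            (((Nat.multinomial Finset.univ v : ℕ) : ℚ) * ∏ i : Fin r, ((b i : ℚ)) ^ (v i)) := by
      intro k hk
      rw [coeff_B_pow d b hd2 n k, Finset.mul_sum]
      refine Finset.sum_congr rfl fun v hv => ?_
      rw [Finset.mem_filter, Finset.mem_piAntidiag] at hv
      have hsv : ∑ i, v i = k := hv.1.1
      rw [hsv]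
      have hcs : (n + k).choose n = (n + k).choose k := Nat.choose_symm_add
      rw [hcs]
    rw [Finset.sum_congr rfl step1, reindex_sum d b hd2 n] at hmain
    have hne : ((n : ℚ) + 1) ≠ 0 := by positivity
    rw [eq_comm]
    calc ∑ v ∈ (Fintype.piFinset fun _ : Fin r => Finset.range (n + 1)).filter
          (fun v => ∑ i, (d i - 1) * v i = n),
        (1 / ((n : ℚ) + 1)) * (((n + ∑ i, v i).choose (∑ i, v i) : ℕ) : ℚ) *
          ((Nat.multinomial Finset.univ v : ℕ) : ℚ) *
          ∏ i : Fin r, ((b i : ℚ)) ^ (v i)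
        = (1 / ((n : ℚ) + 1)) * ∑ v ∈ (Fintype.piFinset fun _ : Fin r => Finset.range (n + 1)).filter
            (fun v => ∑ i, (d i - 1) * v i = n),
          (((n + ∑ i, v i).choose (∑ i, v i) : ℕ) : ℚ) *
            (((Nat.multinomial Finset.univ v : ℕ) : ℚ) * ∏ i : Fin r, ((b i : ℚ)) ^ (v i)) := by
          rw [Finset.mul_sum]
          exact Finset.sum_congr rfl fun v _ => by ring
      _ = (1 / ((n : ℚ) + 1)) * (((n : ℚ) + 1) * a n) := by rw [← hmain]
      _ = a n := by field_simp
  · obtain ⟨m, hm⟩ := RingHom.mem_rangeS.mp (hnat n)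
    exact ⟨m, by exact_mod_cast hm.symm⟩
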